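/- Let the set of jobs J be processing-time-inclusive and satisfy p_j = w_j for every job j. Then every optimal feasible synchronized schedule for J on m shared processors is V-shaped: for each shared processor executing jobs j_1,…,j_k with processing times p_1,…,p_k in this order, there exists an index ℓ ∈ {1,…,k} such that p_1 ≥ p_2 ≥ ⋯ ≥ p_ℓ and p_ℓ ≤ p_{ℓ+1} ≤ ⋯ ≤ p_k. -/

import Mathlib

/-- Start times on a shared processor for a sequence of processing times `q`:
`Tseq q 0 = 0` and `Tseq q (i+1) = (Tseq q i + q_i)/2`; job `i` (0-indexed)
occupies the shared processor during `(Tseq q i, Tseq q (i+1))`. -/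
noncomputable def Tseq (q : List ℝ) : ℕ → ℝ
  | 0 => 0
  | i + 1 => (Tseq q i + q.getD i 0) / 2

/-- A sequence of processing times is feasible on a shared processor if every
job is long enough: `q_i > T_i`. -/
def ListFeasible (q : List ℝ) : Prop :=
  ∀ i < q.length, Tseq q i < q.getD i 0

/-- Total weighted overlap of one shared processor executing jobs with
processing times `q` and weights `v` (in this order): the overlap of the `i`-th
job is `(q_i - T_i)/2`. -/
noncomputable def listOverlap (q v : List ℝ) : ℝ :=
  ∑ i ∈ Finset.range q.length, v.getD i 0 * (q.getD i 0 - Tseq q i) / 2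

/-- A synchronized schedule: each of the `m` shared processors gets a finite
sequence of distinct jobs, and each job appears on at most one shared processor
(jobs appearing nowhere execute on their private processors only). -/
structure SyncSchedule (J : Type) (m : ℕ) where
  seq : Fin m → List J
  nodup : ∀ i, (seq i).Nodup
  disj : ∀ i i' j, j ∈ seq i → j ∈ seq i' → i = i'

namespace SyncSchedule

variable {J : Type} {m : ℕ}

/-- Feasibility of a synchronized schedule for processing times `p`. -/
def Feasible (p : J → ℝ) (S : SyncSchedule J m) : Prop :=
  ∀ i, ListFeasible ((S.seq i).map p)

/-- Total weighted overlap of a synchronized schedule. -/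
noncomputable def Omega (p w : J → ℝ) (S : SyncSchedule J m) : ℝ :=
  ∑ i, listOverlap ((S.seq i).map p) ((S.seq i).map w)

/-- A feasible synchronized schedule is optimal if it maximizes the total
weighted overlap among all feasible synchronized schedules. -/
def Optimal (p w : J → ℝ) (S : SyncSchedule J m) : Prop :=
  S.Feasible p ∧ ∀ S' : SyncSchedule J m, S'.Feasible p → S'.Omega p w ≤ S.Omega p w

end SyncSchedule

/-- A finite collection of processing times (given as a list `q`) is
*processing-time-inclusive* if, for its ascending sort `s = [q_1, …, q_k]`,
`Σ_{ℓ=1}^{k-1} q_{ℓ+1} / 2^(k-ℓ) < q_1`; i.e. the makespan of all but the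
shortest job scheduled in ascending order is shorter than the shortest job. -/
def PTInclusive (q : List ℝ) : Prop :=
  ∃ s : List ℝ, s.Perm q ∧ s.Pairwise (· ≤ ·) ∧
    ∑ ℓ ∈ Finset.range (s.length - 1), s.getD (ℓ + 1) 0 / 2 ^ (s.length - 1 - ℓ)
      < s.getD 0 0

/-- Tseq evolution from an arbitrary starting time. -/
noncomputable def TseqFrom (τ : ℝ) (C : List ℝ) : ℕ → ℝ
  | 0 => τ
  | t + 1 => (TseqFrom τ C t + C.getD t 0) / 2

lemma Tseq_append (A B : List ℝ) : ∀ i, i ≤ A.length → Tseq (A ++ B) i = Tseq A i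
  | 0, _ => rfl
  | i + 1, h => by
    have h' : i < A.length := h
    rw [Tseq, Tseq, Tseq_append A B i (le_of_lt h'), List.getD_append _ _ _ _ h']

lemma Tseq_append_from (A C : List ℝ) : ∀ t,
    Tseq (A ++ C) (A.length + t) = TseqFrom (Tseq A A.length) C t
  | 0 => Tseq_append A C _ le_rfl
  | t + 1 => by
    rw [show A.length + (t+1) = (A.length + t) + 1 from rfl, Tseq, TseqFrom,
      Tseq_append_from A C t]
    congr 2
    rcases lt_or_ge t C.length with h | h
    · rw [List.getD_append_right _ _ _ _ (Nat.le_add_right _ _), Nat.add_sub_cancel_left]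
    · rw [List.getD_eq_default, List.getD_eq_default] <;>
        simp [h, Nat.add_le_add_left h]

lemma TseqFrom_cons (τ x : ℝ) (C : List ℝ) : ∀ t,
    TseqFrom τ (x :: C) (t + 1) = TseqFrom ((τ + x) / 2) C t
  | 0 => rfl
  | t + 1 => by
    rw [TseqFrom, TseqFrom_cons τ x C t, TseqFrom]
    rfl

lemma TseqFrom_eq (τ : ℝ) (C : List ℝ) : ∀ t, TseqFrom τ C t = τ / 2 ^ t + TseqFrom 0 C t
  | 0 => by simp [TseqFrom]
  | t + 1 => by
    rw [TseqFrom, TseqFrom, TseqFrom_eq τ C t]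
    ring

/-- Tail overlap. -/
noncomputable def G (τ : ℝ) (C : List ℝ) : ℝ :=
  ∑ t ∈ Finset.range C.length, C.getD t 0 * (C.getD t 0 - TseqFrom τ C t) / 2

lemma listOverlap_append (A C : List ℝ) :
    listOverlap (A ++ C) (A ++ C) = listOverlap A A + G (Tseq A A.length) C := by
  unfold listOverlap G
  rw [List.length_append, Finset.sum_range_add]
  congr 1
  · refine Finset.sum_congr rfl fun i hi => ?_
    rw [Finset.mem_range] at hi
    rw [List.getD_append _ _ _ _ hi, Tseq_append A C i (le_of_lt hi)]
  · refine Finset.sum_congr rfl fun t _ => ?_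
    rw [Tseq_append_from A C t]
    congr 2 <;>
    · rcases lt_or_ge t C.length with h | h
      · rw [List.getD_append_right _ _ _ _ (Nat.le_add_right _ _), Nat.add_sub_cancel_left]
      · rw [List.getD_eq_default, List.getD_eq_default] <;>
          simp [h, Nat.add_le_add_left h]

lemma G_cons (τ x : ℝ) (C : List ℝ) :
    G τ (x :: C) = x * (x - τ) / 2 + G ((τ + x) / 2) C := by
  unfold G
  rw [List.length_cons, Finset.sum_range_succ']
  have h0 : (x :: C).getD 0 0 * ((x :: C).getD 0 0 - TseqFrom τ (x :: C) 0) / 2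
      = x * (x - τ) / 2 := by simp [TseqFrom]
  rw [h0, add_comm]
  congr 1
  refine Finset.sum_congr rfl fun t _ => ?_
  rw [TseqFrom_cons]
  rfl

lemma G_shift (σ σ' : ℝ) (C : List ℝ) :
    G σ C - G σ' C = (σ' - σ) / 2 * ∑ t ∈ Finset.range C.length, C.getD t 0 / 2 ^ t := by
  unfold G
  rw [← Finset.sum_sub_distrib, Finset.mul_sum]
  refine Finset.sum_congr rfl fun t _ => ?_
  rw [TseqFrom_eq σ C t, TseqFrom_eq σ' C t]
  ring

/-- The master swap identity. -/
lemma G_swap (τ a b : ℝ) (C : List ℝ) :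
    G τ (a :: b :: C) - G τ (b :: a :: C)
      = (a - b) * ((∑ t ∈ Finset.range C.length, C.getD t 0 / 2 ^ t) / 8 - τ / 4) := by
  rw [G_cons, G_cons, G_cons, G_cons]
  have h := G_shift ((τ + a) / 2 / 2 + b / 2) ((τ + b) / 2 / 2 + a / 2) C
  have h2 : G ((τ + a) / 2 / 2 + b / 2) C = G (((τ + a) / 2 + b) / 2) C := by
    congr 1; ring
  have h3 : G ((τ + b) / 2 / 2 + a / 2) C = G (((τ + b) / 2 + a) / 2) C := by
    congr 1; ring
  rw [← h2, ← h3] at *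
  set X := ∑ t ∈ Finset.range C.length, C.getD t 0 / 2 ^ t
  have : G ((τ + a) / 2 / 2 + b / 2) C = G ((τ + b) / 2 / 2 + a / 2) C
      + ((τ + b) / 2 / 2 + a / 2 - ((τ + a) / 2 / 2 + b / 2)) / 2 * X := by linarith
  rw [this]
  ring

section PTI

variable {J : Type} [Fintype J] [DecidableEq J]

/-- In a sorted list, at most `u` entries exceed the entry at index `len-1-u`. -/
lemma countP_sorted_le (s : List ℝ) (hsort : s.Pairwise (· ≤ ·)) (u : ℕ) (hu : u < s.length) :
    s.countP (fun x => decide (s.getD (s.length - 1 - u) 0 < x)) ≤ u := by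
  set c := s.getD (s.length - 1 - u) 0 with hc
  have hsplit : s = s.take (s.length - u) ++ s.drop (s.length - u) :=
    (List.take_append_drop _ _).symm
  calc s.countP (fun x => decide (c < x))
      = (s.take (s.length - u)).countP (fun x => decide (c < x))
        + (s.drop (s.length - u)).countP (fun x => decide (c < x)) := by
        conv_lhs => rw [hsplit]
        rw [List.countP_append]
    _ ≤ 0 + u := by
        refine Nat.add_le_add ?_ ?_
        · refine Nat.le_of_eq (List.countP_eq_zero.2 fun a ha => ?_)
          simp only [decide_eq_true_eq, not_lt]
          obtain ⟨i, hi, rfl⟩ := List.mem_take_iff_getElem.1 ha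
          have hi' : i < s.length - u := lt_min_iff.1 hi |>.1
          have hidx : s.length - 1 - u < s.length := by omega
          have : s.getD (s.length - 1 - u) 0 = s[s.length - 1 - u] :=
            List.getD_eq_getElem s 0 hidx
          rw [hc, this]
          have hii : i < s.length := by omega
          rcases eq_or_lt_of_le (Nat.le_of_lt_succ (by omega : i < (s.length - 1 - u) + 1)) with
            h | h
          · exact le_of_eq (by congr 1)
          · have := List.Pairwise.rel_get_of_lt hsort (a := ⟨i, hii⟩)
              (b := ⟨s.length - 1 - u, hidx⟩) h
            simpa [List.get_eq_getElem] using this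
        · have h1 := List.countP_le_length
            (p := fun x => decide (c < x)) (l := s.drop (s.length - u))
          have h2 := List.length_drop (i := s.length - u) (l := s)
          omega
    _ ≤ u := by omega

/-- Any `u+1` distinct jobs contain one whose processing time is at most the
`(u+1)`-th largest value. -/
lemma exists_le_nth_largest (p : J → ℝ) (s : List ℝ)
    (hperm : s.Perm (Finset.univ.toList.map p)) (hsort : s.Pairwise (· ≤ ·))
    (l : List J) (hnd : l.Nodup) (u : ℕ) (hlen : l.length = u + 1) :
    ∃ j ∈ l, p j ≤ s.getD (s.length - 1 - u) 0 := by
  by_contra hcon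
  push_neg at hcon
  set c := s.getD (s.length - 1 - u) 0 with hc
  have hsub : l ⊆ Finset.univ.toList := fun j _ => by simp
  have hsp : l.Subperm Finset.univ.toList := hnd.subperm hsub
  have h1 : l.countP (fun j => decide (c < p j)) = l.length := by
    rw [List.countP_eq_length]
    intro j hj
    simpa using hcon j hj
  have h2 : l.countP (fun j => decide (c < p j))
      ≤ Finset.univ.toList.countP (fun j => decide (c < p j)) :=
    hsp.countP_le _
  have h3 : Finset.univ.toList.countP (fun j => decide (c < p j))
      = (Finset.univ.toList.map p).countP (fun x => decide (c < x)) := by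
    rw [List.countP_map]
    rfl
  have h4 : (Finset.univ.toList.map p).countP (fun x => decide (c < x))
      = s.countP (fun x => decide (c < x)) :=
    (hperm.countP_eq (fun x => decide (c < x))).symm
  have hu : u < s.length := by
    have := hsp.length_le
    have hlen2 : ((Finset.univ : Finset J).toList.map p).length = (Finset.univ : Finset J).toList.length := by simp
    have := hperm.length_eq
    omega
  have h5 := countP_sorted_le s hsort u hu
  rw [← hc] at h5
  omega

/-- Sum of the values of `u` distinct jobs is at most the sum of the `u` largest values. -/
lemma sum_distinct_le_top (p : J → ℝ) (s : List ℝ)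
    (hperm : s.Perm (Finset.univ.toList.map p)) (hsort : s.Pairwise (· ≤ ·)) :
    ∀ u, ∀ l : List J, l.Nodup → l.length = u →
      (l.map p).sum ≤ ∑ t ∈ Finset.range u, s.getD (s.length - 1 - t) 0 := by
  intro u
  induction u with
  | zero => intro l _ hl; rw [List.length_eq_zero_iff.1 hl]; simp
  | succ u ih =>
    intro l hnd hlen
    obtain ⟨j₀, hj₀, hj₀le⟩ := exists_le_nth_largest p s hperm hsort l hnd u hlen
    have hperm' : l.Perm (j₀ :: l.erase j₀) := List.perm_cons_erase hj₀
    have hsum : (l.map p).sum = p j₀ + ((l.erase j₀).map p).sum := by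
      rw [(hperm'.map p).sum_eq]
      simp
    have hnd' : (l.erase j₀).Nodup := hnd.erase j₀
    have hlen' : (l.erase j₀).length = u := by
      rw [l.length_erase_of_mem hj₀, hlen]
      omega
    rw [hsum, Finset.sum_range_succ]
    have := ih (l.erase j₀) hnd' hlen'
    linarith

end PTI


lemma abel_id (v : ℕ → ℝ) : ∀ r : ℕ,
    ∑ t ∈ Finset.range r, v t / 2 ^ (t + 1)
      = (∑ u ∈ Finset.range r, (∑ t ∈ Finset.range (u + 1), v t) / 2 ^ (u + 2))
        + (∑ t ∈ Finset.range r, v t) / 2 ^ (r + 1)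
  | 0 => by simp
  | r + 1 => by
    rw [Finset.sum_range_succ, abel_id v r,
      Finset.sum_range_succ (fun u => (∑ t ∈ Finset.range (u + 1), v t) / 2 ^ (u + 2)),
      Finset.sum_range_succ v r]
    simp only [pow_succ]
    ring

/-- If all prefix sums compare, so do the geometrically weighted sums. -/
lemma weighted_le_of_prefix_le (v v' : ℕ → ℝ) (r : ℕ)
    (h : ∀ u ≤ r, ∑ t ∈ Finset.range u, v t ≤ ∑ t ∈ Finset.range u, v' t) :
    ∑ t ∈ Finset.range r, v t / 2 ^ (t + 1) ≤ ∑ t ∈ Finset.range r, v' t / 2 ^ (t + 1) := by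
  rw [abel_id, abel_id]
  refine add_le_add (Finset.sum_le_sum fun u hu => ?_) ?_
  · rw [Finset.mem_range] at hu
    exact (div_le_div_iff_of_pos_right (by positivity)).2 (h (u + 1) hu)
  · exact (div_le_div_iff_of_pos_right (by positivity)).2 (h r le_rfl)

lemma Tseq_closed (q : List ℝ) : ∀ i : ℕ,
    Tseq q i = ∑ l ∈ Finset.range i, q.getD l 0 / 2 ^ (i - l)
  | 0 => by simp [Tseq]
  | i + 1 => by
    rw [Tseq, Tseq_closed q i, Finset.sum_range_succ,
      show i + 1 - i = 1 by omega, pow_one]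
    have : ∀ l ∈ Finset.range i, q.getD l 0 / 2 ^ (i + 1 - l) = q.getD l 0 / 2 ^ (i - l) / 2 := by
      intro l hl
      rw [Finset.mem_range] at hl
      rw [show i + 1 - l = (i - l) + 1 by omega, pow_succ]
      ring
    rw [Finset.sum_congr rfl this, ← Finset.sum_div]
    ring

lemma Tseq_closed_rev (q : List ℝ) (i : ℕ) :
    Tseq q i = ∑ t ∈ Finset.range i, q.getD (i - 1 - t) 0 / 2 ^ (t + 1) := by
  rw [Tseq_closed]
  rw [← Finset.sum_range_reflect]
  refine Finset.sum_congr rfl fun t ht => ?_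
  rw [Finset.mem_range] at ht
  congr 2
  omega

lemma sum_getD_eq_take (L : List ℝ) : ∀ u, u ≤ L.length →
    ∑ t ∈ Finset.range u, L.getD t 0 = (L.take u).sum
  | 0, _ => by simp
  | u + 1, h => by
    have hu : u < L.length := h
    rw [Finset.sum_range_succ, sum_getD_eq_take L u (by omega), List.getD_eq_getElem L 0 hu,
      List.take_succ, List.sum_append, List.getElem?_eq_getElem hu]
    simp

section Main

variable {J : Type} [Fintype J] [DecidableEq J]
variable (p : J → ℝ) (s : List ℝ)

/-- The key consequence of processing-time inclusiveness : any geometrically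
weighted sum of processing times of distinct jobs (weights 1/2, 1/4, ...) with
at most `|s| - 1` terms is less than the minimum processing time. -/
lemma weighted_lt (hp : ∀ j, 0 < p j)
    (hperm : s.Perm ((Finset.univ : Finset J).toList.map p)) (hsort : s.Pairwise (· ≤ ·))
    (hsum : ∑ ℓ ∈ Finset.range (s.length - 1), s.getD (ℓ + 1) 0 / 2 ^ (s.length - 1 - ℓ)
      < s.getD 0 0)
    (l : List J) (hnd : l.Nodup) (hlen : l.length + 1 ≤ s.length) :
    ∑ t ∈ Finset.range l.length, (l.map p).getD t 0 / 2 ^ (t + 1) < s.getD 0 0 := by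
  have hpos : ∀ x ∈ s, 0 < x := by
    intro x hx
    obtain ⟨j, _, rfl⟩ := List.mem_map.1 (hperm.mem_iff.1 hx)
    exact hp j
  have hgd : ∀ i, 0 ≤ s.getD i 0 := by
    intro i
    rcases lt_or_ge i s.length with h | h
    · rw [List.getD_eq_getElem s 0 h]
      exact le_of_lt (hpos _ (List.getElem_mem h))
    · rw [List.getD_eq_default s 0 h]
  have hpre : ∀ u ≤ l.length, ∑ t ∈ Finset.range u, (l.map p).getD t 0
      ≤ ∑ t ∈ Finset.range u, s.getD (s.length - 1 - t) 0 := by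
    intro u hu
    have h1 : ∑ t ∈ Finset.range u, (l.map p).getD t 0 = ((l.take u).map p).sum := by
      rw [sum_getD_eq_take (l.map p) u (by simpa using hu), ← List.map_take]
    rw [h1]
    refine sum_distinct_le_top p s hperm hsort u (l.take u)
      (hnd.sublist (List.take_sublist u l)) ?_
    rw [List.length_take]
    omega
  have h2 := weighted_le_of_prefix_le (fun t => (l.map p).getD t 0)
    (fun t => s.getD (s.length - 1 - t) 0) l.length hpre
  have h3 : ∑ t ∈ Finset.range l.length, s.getD (s.length - 1 - t) 0 / 2 ^ (t + 1)
      ≤ ∑ t ∈ Finset.range (s.length - 1), s.getD (s.length - 1 - t) 0 / 2 ^ (t + 1) := by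
    refine Finset.sum_le_sum_of_subset_of_nonneg (Finset.range_subset_range.2 (by omega)) ?_
    intro t _ _
    exact div_nonneg (hgd _) (by positivity)
  have h4 : ∑ t ∈ Finset.range (s.length - 1), s.getD (s.length - 1 - t) 0 / 2 ^ (t + 1)
      = ∑ ℓ ∈ Finset.range (s.length - 1), s.getD (ℓ + 1) 0 / 2 ^ (s.length - 1 - ℓ) := by
    rw [← Finset.sum_range_reflect (fun ℓ => s.getD (ℓ + 1) 0 / 2 ^ (s.length - 1 - ℓ))
      (s.length - 1)]
    refine Finset.sum_congr rfl fun t ht => ?_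
    rw [Finset.mem_range] at ht
    have e1 : s.length - 1 - 1 - t + 1 = s.length - 1 - t := by omega
    have e2 : s.length - 1 - (s.length - 1 - 1 - t) = t + 1 := by omega
    rw [e1, e2]
  calc ∑ t ∈ Finset.range l.length, (l.map p).getD t 0 / 2 ^ (t + 1)
      ≤ ∑ t ∈ Finset.range l.length, s.getD (s.length - 1 - t) 0 / 2 ^ (t + 1) := h2
    _ ≤ ∑ t ∈ Finset.range (s.length - 1), s.getD (s.length - 1 - t) 0 / 2 ^ (t + 1) := h3
    _ < s.getD 0 0 := by rw [h4]; exact hsum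

lemma Tseq_lt_s0 (hp : ∀ j, 0 < p j)
    (hperm : s.Perm ((Finset.univ : Finset J).toList.map p)) (hsort : s.Pairwise (· ≤ ·))
    (hsum : ∑ ℓ ∈ Finset.range (s.length - 1), s.getD (ℓ + 1) 0 / 2 ^ (s.length - 1 - ℓ)
      < s.getD 0 0)
    (l : List J) (hnd : l.Nodup) (i : ℕ) (hi : i + 1 ≤ s.length) (hil : i ≤ l.length) :
    Tseq (l.map p) i < s.getD 0 0 := by
  rw [Tseq_closed_rev]
  set l' := (l.take i).reverse with hl'
  have hnd' : l'.Nodup := List.nodup_reverse.2 (hnd.sublist (List.take_sublist i l))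
  have hlen' : l'.length = i := by
    rw [hl', List.length_reverse, List.length_take]
    omega
  have key := weighted_lt p s hp hperm hsort hsum l' hnd' (by omega)
  rw [hlen'] at key
  have heq : ∀ t ∈ Finset.range i,
      (l.map p).getD (i - 1 - t) 0 / 2 ^ (t + 1) = (l'.map p).getD t 0 / 2 ^ (t + 1) := by
    intro t ht
    rw [Finset.mem_range] at ht
    congr 1
    have hmap : l'.map p = ((l.map p).take i).reverse := by
      rw [hl', List.map_reverse, List.map_take]
    have hlen2 : (l'.map p).length = i := by rw [List.length_map, hlen']
    have h1 : t < (l'.map p).length := by omega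
    have h2 : i - 1 - t < (l.map p).length := by rw [List.length_map]; omega
    rw [List.getD_eq_getElem _ 0 h1, List.getD_eq_getElem _ 0 h2]
    symm
    have h3 : t < ((l.map p).take i).reverse.length := by
      rw [List.length_reverse, List.length_take, List.length_map]; omega
    have h4 : ((l.map p).take i).length = i := by
      rw [List.length_take, List.length_map]; omega
    calc (l'.map p)[t]'h1 = ((l.map p).take i).reverse[t]'h3 := by
          congr 1
      _ = ((l.map p).take i)[((l.map p).take i).length - 1 - t]'(by omega) := by
          rw [List.getElem_reverse]
      _ = (l.map p)[i - 1 - t]'h2 := by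
          rw [List.getElem_take]
          congr 1
          omega
  rw [Finset.sum_congr rfl heq]
  exact key

lemma s0_le_p (hperm : s.Perm ((Finset.univ : Finset J).toList.map p))
    (hsort : s.Pairwise (· ≤ ·)) (j : J) : s.getD 0 0 ≤ p j := by
  have hmem : p j ∈ s := hperm.mem_iff.2 (List.mem_map.2 ⟨j, by simp, rfl⟩)
  cases s with
  | nil => simp at hmem
  | cons a t =>
    rcases List.mem_cons.1 hmem with h | h
    · exact le_of_eq h.symm
    · exact (List.pairwise_cons.1 hsort).1 _ h

lemma listFeasible_of_nodup (hp : ∀ j, 0 < p j)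
    (hperm : s.Perm ((Finset.univ : Finset J).toList.map p)) (hsort : s.Pairwise (· ≤ ·))
    (hsum : ∑ ℓ ∈ Finset.range (s.length - 1), s.getD (ℓ + 1) 0 / 2 ^ (s.length - 1 - ℓ)
      < s.getD 0 0)
    (l : List J) (hnd : l.Nodup) : ListFeasible (l.map p) := by
  intro i hi
  rw [List.length_map] at hi
  have hslen : s.length = Fintype.card J := by
    rw [hperm.length_eq, List.length_map, Finset.length_toList, Finset.card_univ]
  have hcard : l.length ≤ s.length := hslen ▸ hnd.length_le_card
  have h1 : Tseq (l.map p) i < s.getD 0 0 :=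
    Tseq_lt_s0 p s hp hperm hsort hsum l hnd i (by omega) (by omega)
  have h2 : (l.map p).getD i 0 = p (l[i]'hi) := by
    rw [List.getD_eq_getElem _ 0 (by simpa using hi), List.getElem_map]
  rw [h2]
  exact lt_of_lt_of_le h1 (s0_le_p p s hperm hsort _)

end Main

/-- The adjacent-swap optimality inequality: in an optimal schedule, for every
position `j`, swapping jobs at positions `j` and `j+1` cannot increase the
total weighted overlap, which yields this sign condition. -/
lemma swap_step {J : Type} [Fintype J] [DecidableEq J] {m : ℕ}
    (p w : J → ℝ) (hp : ∀ j, 0 < p j) (hpw : ∀ j, p j = w j)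
    (s : List ℝ)
    (hperm : s.Perm ((Finset.univ : Finset J).toList.map p)) (hsort : s.Pairwise (· ≤ ·))
    (hsum : ∑ ℓ ∈ Finset.range (s.length - 1), s.getD (ℓ + 1) 0 / 2 ^ (s.length - 1 - ℓ)
      < s.getD 0 0)
    (S : SyncSchedule J m) (hopt : S.Optimal p w) (r : Fin m) (j : ℕ)
    (hj : j + 1 < (S.seq r).length) :
    0 ≤ (((S.seq r).map p).getD j 0 - ((S.seq r).map p).getD (j + 1) 0) *
        ((∑ t ∈ Finset.range ((S.seq r).length - (j + 2)),
            ((S.seq r).map p).getD (j + 2 + t) 0 / 2 ^ t) / 8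
          - Tseq ((S.seq r).map p) j / 4) := by
  classical
  set L := S.seq r with hLdef
  have hx : j < L.length := by omega
  set x := L[j]'hx with hxdef
  set y := L[j + 1]'hj with hydef
  have hdecomp : L = L.take j ++ x :: y :: L.drop (j + 2) := by
    conv_lhs => rw [← List.take_append_drop j L]
    congr 1
    rw [List.drop_eq_getElem_cons hx]
    congr 1
    exact List.drop_eq_getElem_cons hj
  set L' := L.take j ++ y :: x :: L.drop (j + 2) with hL'def
  have hpermswap : L'.Perm L := by
    conv_rhs => rw [hdecomp]
    exact List.Perm.append_left _ (List.Perm.swap x y _)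
  have hnodupL' : L'.Nodup := hpermswap.nodup_iff.2 (S.nodup r)
  set S' : SyncSchedule J m :=
    ⟨fun i => if i = r then L' else S.seq i,
     fun i => by
       by_cases hi : i = r
       · simpa [hi] using hnodupL'
       · simpa [hi] using S.nodup i,
     fun i i' j0 h1 h2 => by
       have hmem : ∀ i j0, j0 ∈ (if i = r then L' else S.seq i) → j0 ∈ S.seq i := by
         intro i j0 h0
         by_cases hi : i = r
         · subst hi
           rw [if_pos rfl] at h0
           exact hpermswap.subset h0
         · rwa [if_neg hi] at h0
       exact S.disj i i' j0 (hmem i j0 h1) (hmem i' j0 h2)⟩ with hS'def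
  have hfeas' : S'.Feasible p := by
    intro i
    by_cases hi : i = r
    · have h1 : S'.seq i = L' := by simp [hS'def, hi]
      rw [h1]
      exact listFeasible_of_nodup p s hp hperm hsort hsum L' hnodupL'
    · have h1 : S'.seq i = S.seq i := by simp [hS'def, hi]
      rw [h1]
      exact hopt.1 i
  have hΩ := hopt.2 S' hfeas'
  have hwp : ∀ M : List J, M.map w = M.map p := by
    intro M
    have hw : w = p := funext fun j => (hpw j).symm
    rw [hw]
  have hcalc : S.Omega p w - S'.Omega p w
      = listOverlap (L.map p) (L.map p) - listOverlap (L'.map p) (L'.map p) := by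
    unfold SyncSchedule.Omega
    rw [← Finset.sum_sub_distrib]
    rw [Finset.sum_eq_single r]
    · have h1 : S'.seq r = L' := by simp [hS'def]
      rw [h1, hwp, hwp, hLdef]
    · intro i _ hi
      have h1 : S'.seq i = S.seq i := by simp [hS'def, hi]
      rw [h1, sub_self]
    · intro h
      exact absurd (Finset.mem_univ r) h
  set Ap := (L.take j).map p with hApdef
  set Cp := (L.drop (j + 2)).map p with hCpdef
  have e1 : L.map p = Ap ++ p x :: p y :: Cp := by
    conv_lhs => rw [hdecomp]
    simp [hApdef, hCpdef]
  have e2 : L'.map p = Ap ++ p y :: p x :: Cp := by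
    rw [hL'def]
    simp [hApdef, hCpdef]
  have hover : listOverlap (L.map p) (L.map p) - listOverlap (L'.map p) (L'.map p)
      = (p x - p y) * ((∑ t ∈ Finset.range Cp.length, Cp.getD t 0 / 2 ^ t) / 8
          - Tseq Ap Ap.length / 4) := by
    rw [e1, e2, listOverlap_append, listOverlap_append]
    have hG := G_swap (Tseq Ap Ap.length) (p x) (p y) Cp
    linarith
  have hlenAp : Ap.length = j := by
    rw [hApdef, List.length_map, List.length_take]
    omega
  have hgj : (L.map p).getD j 0 = p x := by
    rw [List.getD_eq_getElem _ 0 (by rw [List.length_map]; omega), List.getElem_map]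
  have hgj1 : (L.map p).getD (j + 1) 0 = p y := by
    rw [List.getD_eq_getElem _ 0 (by rw [List.length_map]; omega), List.getElem_map]
  have hT : Tseq (L.map p) j = Tseq Ap Ap.length := by
    conv_lhs => rw [e1]
    rw [Tseq_append Ap _ j (by omega), hlenAp]
  have hlenCp : Cp.length = L.length - (j + 2) := by
    rw [hCpdef, List.length_map, List.length_drop]
  have htail : ∑ t ∈ Finset.range (L.length - (j + 2)), (L.map p).getD (j + 2 + t) 0 / 2 ^ t
      = ∑ t ∈ Finset.range Cp.length, Cp.getD t 0 / 2 ^ t := by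
    rw [hlenCp]
    refine Finset.sum_congr rfl fun t ht => ?_
    rw [Finset.mem_range] at ht
    congr 1
    have h1 : j + 2 + t < (L.map p).length := by rw [List.length_map]; omega
    have h2 : t < Cp.length := by omega
    rw [List.getD_eq_getElem _ 0 h1, List.getD_eq_getElem _ 0 h2]
    have h3 : Cp = (L.map p).drop (j + 2) := by rw [hCpdef, List.map_drop]
    symm
    calc Cp[t]'h2 = ((L.map p).drop (j + 2))[t]'(by rw [← h3]; exact h2) := by congr 1
      _ = (L.map p)[j + 2 + t]'h1 := by rw [List.getElem_drop]
  rw [hgj, hgj1, hT, htail]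
  linarith [hΩ, hcalc, hover]

lemma anti_of_adj (f : ℕ → ℝ) (ℓ : ℕ) (hadj : ∀ i, i + 1 ≤ ℓ → f (i + 1) ≤ f i) :
    ∀ b a, a ≤ b → b ≤ ℓ → f b ≤ f a := by
  intro b
  induction b with
  | zero => intro a ha _; exact le_of_eq (by rw [Nat.le_zero.1 ha])
  | succ b ih =>
    intro a ha hbl
    rcases eq_or_lt_of_le ha with rfl | h'
    · exact le_rfl
    · exact ((hadj b hbl).trans (ih a (by omega) (by omega)))

lemma mono_of_adj (f : ℕ → ℝ) (ℓ n : ℕ) (hadj : ∀ i, ℓ ≤ i → i + 1 < n → f i ≤ f (i + 1)) :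
    ∀ b a, ℓ ≤ a → a ≤ b → b < n → f a ≤ f b := by
  intro b
  induction b with
  | zero => intro a _ ha _; exact le_of_eq (by rw [Nat.le_zero.1 ha])
  | succ b ih =>
    intro a hla ha hbn
    rcases eq_or_lt_of_le ha with rfl | h'
    · exact le_rfl
    · exact (ih a hla (by omega) (by omega)).trans (hadj b (by omega) hbn)

/-- **V-shapeness.** If the whole set of jobs is
processing-time-inclusive and `p_j = w_j` for every job, then every optimal
feasible synchronized schedule is V-shaped: on each shared processor executing
jobs `j_1, …, j_k` (here 0-indexed, with processing times read off the
sequence) there is an index `ℓ` such that the processing times are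
non-increasing up to position `ℓ` and non-decreasing from position `ℓ` on. -/
theorem optimal_is_V_shaped
    {J : Type} [Fintype J] [DecidableEq J] {m : ℕ} (hm : 1 ≤ m)
    (p w : J → ℝ) (hp : ∀ j, 0 < p j) (hpw : ∀ j, p j = w j)
    (hPTI : PTInclusive (Finset.univ.toList.map p))
    (S : SyncSchedule J m) (hopt : S.Optimal p w) :
    ∀ r : Fin m, (S.seq r) ≠ [] →
      ∃ ℓ < (S.seq r).length,
        (∀ a b, a ≤ b → b ≤ ℓ →
          ((S.seq r).map p).getD b 0 ≤ ((S.seq r).map p).getD a 0) ∧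
        (∀ a b, ℓ ≤ a → a ≤ b → b < (S.seq r).length →
          ((S.seq r).map p).getD a 0 ≤ ((S.seq r).map p).getD b 0) := by
  classical
  intro r hne
  obtain ⟨s, hperm0, hsort, hsum⟩ := hPTI
  set q := (S.seq r).map p with hqdef
  set n := (S.seq r).length with hndef
  have hqlen : q.length = n := by rw [hqdef, List.length_map]
  have hn1 : 1 ≤ n := by
    rw [hndef]
    exact List.length_pos_iff.2 hne
  have hslen : s.length = Fintype.card J := by
    rw [hperm0.length_eq, List.length_map, Finset.length_toList, Finset.card_univ]
  have hnk : n ≤ s.length := by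
    rw [hslen, hndef]
    exact (S.nodup r).length_le_card
  -- the quantity controlling adjacent swaps
  set h : ℕ → ℝ := fun j =>
    (∑ t ∈ Finset.range (n - (j + 2)), q.getD (j + 2 + t) 0 / 2 ^ t) / 8 - Tseq q j / 4
    with hhdef
  have hswap : ∀ j, j + 1 < n → 0 ≤ (q.getD j 0 - q.getD (j + 1) 0) * h j := by
    intro j hj
    exact swap_step p w hp hpw s hperm0 hsort hsum S hopt r j hj
  have hs0le : ∀ i, i < n → s.getD 0 0 ≤ q.getD i 0 := by
    intro i hi
    have hi' : i < (S.seq r).length := by rw [← hndef]; exact hi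
    have hq : q.getD i 0 = p ((S.seq r)[i]'hi') := by
      rw [hqdef, List.getD_eq_getElem _ 0 (by rw [List.length_map]; exact hi'),
        List.getElem_map]
    rw [hq]
    exact s0_le_p p s hperm0 hsort _
  -- h is strictly decreasing
  have hmono : ∀ j, j + 2 < n → h (j + 1) < h j := by
    intro j hj
    have e13 : j + 1 + 2 = j + 3 := by omega
    have hM : n - (j + 2) = (n - (j + 3)) + 1 := by omega
    -- tail sum of h (j+1)
    set A : ℝ := ∑ t ∈ Finset.range (n - (j + 3)), q.getD (j + 3 + t) 0 / 2 ^ t with hAdef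
    have hSc : ∑ t ∈ Finset.range (n - (j + 2)), q.getD (j + 2 + t) 0 / 2 ^ t
        = q.getD (j + 2) 0 + A / 2 := by
      rw [hM, Finset.sum_range_succ']
      have hfirst : q.getD (j + 2 + 0) 0 / 2 ^ (0 : ℕ) = q.getD (j + 2) 0 := by
        norm_num
      rw [hfirst, add_comm]
      congr 1
      rw [hAdef, Finset.sum_div, ← Finset.sum_div, Finset.sum_div]
      refine Finset.sum_congr rfl fun t ht => ?_
      have e1 : j + 2 + (t + 1) = j + 3 + t := by omega
      rw [e1, pow_succ]
      ring
    have hTrec : Tseq q (j + 1) = (Tseq q j + q.getD j 0) / 2 := rfl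
    -- bound the tail
    have hb1 : A / 2 < s.getD 0 0 := by
      have hnd' : ((S.seq r).drop (j + 3)).Nodup := (S.nodup r).sublist (List.drop_sublist _ _)
      have hlend : ((S.seq r).drop (j + 3)).length = n - (j + 3) := by
        rw [List.length_drop, ← hndef]
      have hd := weighted_lt p s hp hperm0 hsort hsum ((S.seq r).drop (j + 3)) hnd'
        (by rw [hlend]; omega)
      rw [hlend] at hd
      have heq : ∀ t ∈ Finset.range (n - (j + 3)),
          (((S.seq r).drop (j + 3)).map p).getD t 0 / 2 ^ (t + 1)
            = q.getD (j + 3 + t) 0 / 2 ^ (t + 1) := by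
        intro t ht
        rw [Finset.mem_range] at ht
        congr 1
        have h1 : t < (((S.seq r).drop (j + 3)).map p).length := by
          rw [List.length_map, hlend]; exact ht
        have h2 : j + 3 + t < q.length := by rw [hqlen]; omega
        rw [List.getD_eq_getElem _ 0 h1, List.getD_eq_getElem _ 0 h2]
        have h3 : ((S.seq r).drop (j + 3)).map p = q.drop (j + 3) := by
          rw [hqdef, List.map_drop]
        calc (((S.seq r).drop (j + 3)).map p)[t]'h1
            = (q.drop (j + 3))[t]'(by rw [← h3]; exact h1) := by congr 1
          _ = q[j + 3 + t]'h2 := by rw [List.getElem_drop]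
      rw [Finset.sum_congr rfl heq] at hd
      have hhalf : ∑ t ∈ Finset.range (n - (j + 3)), q.getD (j + 3 + t) 0 / 2 ^ (t + 1)
          = A / 2 := by
        rw [hAdef, Finset.sum_div]
        refine Finset.sum_congr rfl fun t ht => ?_
        rw [pow_succ]
        ring
      rwa [hhalf] at hd
    have hb2 : s.getD 0 0 ≤ q.getD (j + 2) 0 := hs0le (j + 2) (by omega)
    have hb3 : Tseq q j < s.getD 0 0 := by
      rw [hqdef]
      exact Tseq_lt_s0 p s hp hperm0 hsort hsum (S.seq r) (S.nodup r) j (by omega) (by omega)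
    have hb4 : s.getD 0 0 ≤ q.getD j 0 := hs0le j (by omega)
    show (∑ t ∈ Finset.range (n - (j + 1 + 2)), q.getD (j + 1 + 2 + t) 0 / 2 ^ t) / 8
        - Tseq q (j + 1) / 4
      < (∑ t ∈ Finset.range (n - (j + 2)), q.getD (j + 2 + t) 0 / 2 ^ t) / 8 - Tseq q j / 4
    rw [e13, hSc, hTrec, ← hAdef]
    linarith
  -- strict chain for h
  have hchain : ∀ b, b + 1 < n → ∀ a, a < b → h b < h a := by
    intro b
    induction b with
    | zero => intro _ a ha; omega
    | succ b ih =>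
      intro hb a ha
      have hstep : h (b + 1) < h b := hmono b (by omega)
      rcases Nat.lt_succ_iff_lt_or_eq.1 ha with h' | rfl
      · exact hstep.trans (ih (by omega) a h')
      · exact hstep
  -- no increase followed by a later decrease
  have key : ∀ i jj, i < jj → jj + 1 < n →
      ¬(q.getD i 0 < q.getD (i + 1) 0 ∧ q.getD (jj + 1) 0 < q.getD jj 0) := by
    rintro i jj hij hjj ⟨h1, h2⟩
    have hi1 : i + 1 < n := by omega
    have hhi : h i ≤ 0 := by
      by_contra hcon
      push_neg at hcon
      have := mul_neg_of_neg_of_pos (sub_neg.2 h1) hcon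
      have h0 := hswap i hi1
      linarith
    have hhj : 0 ≤ h jj := by
      by_contra hcon
      push_neg at hcon
      have := mul_neg_of_pos_of_neg (sub_pos.2 h2) hcon
      have h0 := hswap jj hjj
      linarith
    have := hchain jj hjj i hij
    linarith
  -- construct the V-shape index
  set D : Finset ℕ := (Finset.range (n - 1)).filter
    (fun j => q.getD (j + 1) 0 < q.getD j 0) with hDdef
  by_cases hD : D.Nonempty
  · set d := D.max' hD with hddef
    have hdmem : d ∈ D := D.max'_mem hD
    rw [hDdef, Finset.mem_filter, Finset.mem_range] at hdmem
    refine ⟨d + 1, by omega, ?_, ?_⟩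
    · -- non-increasing up to d+1
      have hadj : ∀ i, i + 1 ≤ d + 1 → q.getD (i + 1) 0 ≤ q.getD i 0 := by
        intro i hi
        by_contra hcon
        push_neg at hcon
        rcases eq_or_lt_of_le (Nat.le_of_succ_le_succ hi) with rfl | h'
        · exact absurd hdmem.2 (by linarith)
        · exact key i d h' (by omega) ⟨hcon, hdmem.2⟩
      intro a b hab hb
      exact anti_of_adj (fun i => q.getD i 0) (d + 1) hadj b a hab hb
    · -- non-decreasing from d+1 on
      have hadj : ∀ i, d + 1 ≤ i → i + 1 < n → q.getD i 0 ≤ q.getD (i + 1) 0 := by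
        intro i hdi hin
        by_contra hcon
        push_neg at hcon
        have hiD : i ∈ D := by
          rw [hDdef, Finset.mem_filter, Finset.mem_range]
          exact ⟨by omega, hcon⟩
        have := D.le_max' i hiD
        omega
      intro a b hla hab hb
      exact mono_of_adj (fun i => q.getD i 0) (d + 1) n hadj b a hla hab hb
  · refine ⟨0, by omega, ?_, ?_⟩
    · intro a b hab hb
      have : a = 0 := by omega
      have : b = 0 := by omega
      subst this
      have : a = 0 := by omega
      subst this
      exact le_rfl
    · have hadj : ∀ i, 0 ≤ i → i + 1 < n → q.getD i 0 ≤ q.getD (i + 1) 0 := by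
        intro i _ hin
        by_contra hcon
        push_neg at hcon
        refine hD ⟨i, ?_⟩
        rw [hDdef, Finset.mem_filter, Finset.mem_range]
        exact ⟨by omega, hcon⟩
      intro a b hla hab hb
      exact mono_of_adj (fun i => q.getD i 0) 0 n hadj b a hla hab hb
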